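/- Let S be a sequence of n integers whose first m entries are 0 and whose remaining entries are positive, and let S' be S with its leading m zeros deleted. Then (n−m)·H_k(S') ≤ n·H_k(S) for every k ≥ 0. -/

import Mathlib

/-- Zeroth-order empirical entropy, multiplied by the length of the sequence:
`|T| · H₀(T) = Σ_c n_c · log₂(|T| / n_c)`. -/
noncomputable def nH0 (T : List ℕ) : ℝ :=
  ∑ c ∈ T.toFinset, (T.count c : ℝ) * Real.logb 2 ((T.length : ℝ) / (T.count c : ℝ))

/-- The sequence of characters immediately following the occurrences of the
length-`k` context `w` in `S`. -/
def ctxFollow (S : List ℕ) (k : ℕ) (w : List ℕ) : List ℕ :=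
  ((List.range (S.length - k)).filter (fun i => decide ((S.drop i).take k = w))).map
    (fun i => S.getD (i + k) 0)

/-- `k`-th order empirical entropy multiplied by the length of the sequence:
`n · H_k(S) = Σ_w |S_w| · H₀(S_w)`, summing over the length-`k` contexts `w`
occurring in `S`. -/
noncomputable def nHk (S : List ℕ) (k : ℕ) : ℝ :=
  ∑ w ∈ ((List.range (S.length - k)).map (fun i => (S.drop i).take k)).toFinset,
    nH0 (ctxFollow S k w)

lemma nH0_term_nonneg (L : List ℕ) (c : ℕ) :
    0 ≤ (L.count c : ℝ) * Real.logb 2 ((L.length : ℝ) / (L.count c : ℝ)) := by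
  rcases Nat.eq_zero_or_pos (L.count c) with h | h
  · simp [h]
  · have h1' : (0:ℝ) < L.count c := by exact_mod_cast h
    refine mul_nonneg h1'.le (Real.logb_nonneg one_lt_two ?_)
    rw [le_div_iff₀ h1']
    have h2 := List.count_le_length (a := c) (l := L)
    simpa using (by exact_mod_cast h2 : (L.count c : ℝ) ≤ L.length)

lemma nH0_nonneg (T : List ℕ) : 0 ≤ nH0 T :=
  Finset.sum_nonneg fun c _ => nH0_term_nonneg T c

lemma nHk_nonneg (S : List ℕ) (k : ℕ) : 0 ≤ nHk S k :=
  Finset.sum_nonneg fun _ _ => nH0_nonneg _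

lemma map_getD_range (L : List ℕ) :
    (List.range L.length).map (fun i => L.getD i 0) = L := by
  apply List.ext_getElem
  · simp
  · intro i h1 h2
    simp only [List.getElem_map, List.getElem_range]
    exact List.getD_eq_getElem L 0 h2

lemma ctxFollow_zero (L : List ℕ) : ctxFollow L 0 [] = L := by
  unfold ctxFollow
  simp only [List.take_zero, decide_true, List.filter_true, Nat.sub_zero, Nat.add_zero]
  exact map_getD_range L

lemma nHk_zero (L : List ℕ) (hL : L ≠ []) : nHk L 0 = nH0 L := by
  unfold nHk
  have h1 : ((List.range (L.length - 0)).map (fun i => (L.drop i).take 0))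
      = List.replicate L.length [] := by
    refine List.eq_replicate_iff.mpr ⟨by simp, ?_⟩
    intro b hb
    simp only [List.mem_map] at hb
    obtain ⟨i, _, rfl⟩ := hb
    simp
  rw [h1, List.toFinset_replicate_of_ne_zero ((List.length_pos_iff.mpr hL).ne'),
    Finset.sum_singleton, ctxFollow_zero]

lemma nH0_mono (m : ℕ) (T : List ℕ) (hT : ∀ x ∈ T, 0 < x) :
    nH0 T ≤ nH0 (List.replicate m 0 ++ T) := by
  set S := List.replicate m 0 ++ T with hSdef
  have hSlen : S.length = m + T.length := by simp [hSdef]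
  have hsub : T.toFinset ⊆ S.toFinset := by
    intro c hc
    simp only [List.mem_toFinset] at *
    exact List.mem_append_right _ hc
  have hcount : ∀ c ∈ T.toFinset, S.count c = T.count c := by
    intro c hc
    have hc0 : c ≠ 0 := (hT c (List.mem_toFinset.mp hc)).ne'
    rw [hSdef, List.count_append, List.count_replicate]
    simp [Ne.symm hc0]
  have step1 : nH0 T ≤
      ∑ c ∈ T.toFinset, (T.count c : ℝ) * Real.logb 2 ((S.length : ℝ) / (T.count c : ℝ)) := by
    refine Finset.sum_le_sum fun c hc => ?_
    have h1 : 0 < T.count c := List.count_pos_iff.mpr (List.mem_toFinset.mp hc)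
    have h1' : (0:ℝ) < T.count c := by exact_mod_cast h1
    refine mul_le_mul_of_nonneg_left ?_ (by positivity)
    have hx : (0:ℝ) < (T.length : ℝ) / (T.count c : ℝ) := by
      have : (0:ℝ) < T.length := by
        exact_mod_cast Nat.lt_of_lt_of_le h1 (List.count_le_length (a := c) (l := T))
      positivity
    have hy : (0:ℝ) < (S.length : ℝ) / (T.count c : ℝ) := by
      have : (0:ℝ) < S.length := by
        have : 0 < T.length := Nat.lt_of_lt_of_le h1 (List.count_le_length (a := c) (l := T))
        exact_mod_cast by omega
      positivity
    refine (Real.logb_le_logb one_lt_two hx hy).mpr ?_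
    gcongr
    exact_mod_cast by omega
  calc nH0 T ≤ ∑ c ∈ T.toFinset, (T.count c : ℝ) * Real.logb 2 ((S.length : ℝ) / (T.count c : ℝ)) :=
      step1
    _ = ∑ c ∈ T.toFinset, (S.count c : ℝ) * Real.logb 2 ((S.length : ℝ) / (S.count c : ℝ)) :=
      Finset.sum_congr rfl fun c hc => by rw [hcount c hc]
    _ ≤ nH0 S :=
      Finset.sum_le_sum_of_subset_of_nonneg hsub fun c _ _ => nH0_term_nonneg S c

/-- If `S` consists of `m` leading zeros followed by a sequence `T` of positive
integers, then deleting the leading zeros does not increase the `k`-th order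
empirical entropy times the length: `(n−m)·H_k(S') ≤ n·H_k(S)`. -/
theorem nHk_drop_leading_zeros_le (m k : ℕ) (T : List ℕ) (hT : ∀ x ∈ T, 0 < x) :
    nHk T k ≤ nHk (List.replicate m 0 ++ T) k := by
  set S := List.replicate m 0 ++ T with hSdef
  have hSlen : S.length = m + T.length := by simp [hSdef]
  by_cases hTk : T.length < k
  · have hz : nHk T k = 0 := by
      unfold nHk
      have h0 : T.length - k = 0 := by omega
      simp [h0]
    rw [hz]; exact nHk_nonneg _ _
  push_neg at hTk
  rcases Nat.eq_zero_or_pos k with hk | hk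
  · subst hk
    by_cases hT0 : T = []
    · subst hT0
      have hz : nHk ([] : List ℕ) 0 = 0 := by unfold nHk; simp
      rw [hz]; exact nHk_nonneg _ _
    · have hS0 : S ≠ [] := by
        intro h
        have := congrArg List.length h
        simp [hSlen] at this
        exact hT0 (by simpa [List.length_eq_zero_iff] using this.2)
      rw [nHk_zero T hT0, nHk_zero S hS0, hSdef]
      exact nH0_mono m T hT
  · -- k ≥ 1
    have hdropS : ∀ j, S.drop (m + j) = T.drop j := by
      intro j
      rw [hSdef]
      simpa using List.drop_append (l₁ := List.replicate m (0:ℕ)) (l₂ := T) (i := m + j)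
    have hgetD : ∀ i, S.getD (m + i) 0 = T.getD i 0 := by
      intro i
      rw [hSdef, List.getD_append_right _ _ _ _ (by simp)]
      simp
    have hlenk : S.length - k = m + (T.length - k) := by omega
    have hctx : ∀ w : List ℕ, (∀ x ∈ w, 0 < x) → ctxFollow S k w = ctxFollow T k w := by
      intro w hw
      unfold ctxFollow
      rw [hlenk, List.range_add, List.filter_append, List.map_append]
      have h1 : (List.range m).filter (fun i => decide ((S.drop i).take k = w)) = [] := by
        rw [List.filter_eq_nil_iff]
        intro i hi
        simp only [List.mem_range] at hi
        simp only [decide_eq_true_eq]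
        intro heq
        have h0 : ((S.drop i).take k)[0]? = some 0 := by
          rw [List.getElem?_take, if_pos hk, List.getElem?_drop]
          rw [hSdef, List.getElem?_append, if_pos (by simpa using hi)]
          simp [List.getElem?_replicate, hi]
        rw [heq] at h0
        exact absurd (hw 0 (List.mem_of_getElem? h0)) (lt_irrefl 0)
      rw [h1, List.map_nil, List.nil_append, List.filter_map, List.map_map]
      have hfil : List.filter
          ((fun i => decide ((S.drop i).take k = w)) ∘ (fun x => m + x))
          (List.range (T.length - k))
          = List.filter (fun i => decide ((T.drop i).take k = w))
            (List.range (T.length - k)) := by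
        apply List.filter_congr
        intro i _
        simp only [Function.comp_apply, hdropS i]
      rw [hfil]
      apply List.map_congr_left
      intro i _
      simp only [Function.comp_apply]
      rw [show m + i + k = m + (i + k) by omega, hgetD]
    have hsub : ((List.range (T.length - k)).map (fun i => (T.drop i).take k)).toFinset ⊆
        ((List.range (S.length - k)).map (fun i => (S.drop i).take k)).toFinset := by
      intro w hw
      simp only [List.mem_toFinset, List.mem_map, List.mem_range] at *
      obtain ⟨j, hj, rfl⟩ := hw
      exact ⟨m + j, by omega, by rw [hdropS]⟩
    have hwpos : ∀ w ∈ ((List.range (T.length - k)).map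
          (fun i => (T.drop i).take k)).toFinset, ∀ x ∈ w, 0 < x := by
      intro w hw x hx
      simp only [List.mem_toFinset, List.mem_map, List.mem_range] at hw
      obtain ⟨j, hj, rfl⟩ := hw
      exact hT x (List.mem_of_mem_drop (List.mem_of_mem_take hx))
    unfold nHk
    calc ∑ w ∈ ((List.range (T.length - k)).map (fun i => (T.drop i).take k)).toFinset,
          nH0 (ctxFollow T k w)
        = ∑ w ∈ ((List.range (T.length - k)).map (fun i => (T.drop i).take k)).toFinset,
          nH0 (ctxFollow S k w) :=
        Finset.sum_congr rfl fun w hw => by rw [hctx w (hwpos w hw)]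
      _ ≤ ∑ w ∈ ((List.range (S.length - k)).map (fun i => (S.drop i).take k)).toFinset,
          nH0 (ctxFollow S k w) :=
        Finset.sum_le_sum_of_subset_of_nonneg hsub fun w _ _ => nH0_nonneg _
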